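/- SEF does not imply LEF: in the instance with 2 agents and 2 items a, b, where both agents prefer a to b and the random priority is the point mass on the priority with σ(1) < σ(2), the random assignment giving each agent probability 1/2 of item a and probability 1/2 of item b satisfies SEF but does not satisfy LEF. -/

import Mathlib

open Finset

/-- `X` stochastically dominates `Y` under the ranking `π` (a bijection from items to ranks):
for every rank `t`, the cumulative probability of the `t` most-preferred items is at least
as large under `X` as under `Y`. -/
def SD {m : ℕ} (π : Equiv.Perm (Fin m)) (X Y : Fin m → ℝ) : Prop :=
  ∀ t : Fin m, ∑ r ∈ Finset.Iic t, Y (π.symm r) ≤ ∑ r ∈ Finset.Iic t, X (π.symm r)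

/-- A random assignment: an `n × m` matrix of nonnegative reals, each row summing to `1`
and each column summing to at most `1`. -/
def IsRandomAssignment {n m : ℕ} (P : Fin n → Fin m → ℝ) : Prop :=
  (∀ i j, 0 ≤ P i j) ∧ (∀ i, ∑ j, P i j = 1) ∧ (∀ j, ∑ i, P i j ≤ 1)

/-- A random priority: a (finitely supported) probability distribution over simple priorities
(bijections from agents to ranks). -/
def IsRandomPriority {n : ℕ} (ρ : Equiv.Perm (Fin n) → ℝ) : Prop :=
  (∀ σ, 0 ≤ ρ σ) ∧ (∑ σ, ρ σ = 1)

/-- A lottery: a probability distribution over simple assignments (injective maps from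
agents to items). -/
def IsLottery {n m : ℕ} (L : (Fin n → Fin m) → ℝ) : Prop :=
  (∀ f, 0 ≤ L f) ∧ (∑ f, L f = 1) ∧ (∀ f, L f ≠ 0 → Function.Injective f)

/-- The random assignment induced by a lottery: `p i j = Pr_{f ∼ L}[f i = j]`. -/
def induced {n m : ℕ} (L : (Fin n → Fin m) → ℝ) : Fin n → Fin m → ℝ :=
  fun i j => ∑ f ∈ Finset.univ.filter (fun f => f i = j), L f

/-- `rankDist ρ i r = Pr_{σ ∼ Σ}[σ i = r]`, agent `i`'s rank distribution. -/
def rankDist {n : ℕ} (ρ : Equiv.Perm (Fin n) → ℝ) (i r : Fin n) : ℝ :=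
  ∑ σ ∈ Finset.univ.filter (fun σ => σ i = r), ρ σ

/-- Ordinal efficiency: no other random assignment stochastically dominates `P`
for every agent. -/
def OE {n m : ℕ} (π : Fin n → Equiv.Perm (Fin m)) (P : Fin n → Fin m → ℝ) : Prop :=
  ¬ ∃ Q : Fin n → Fin m → ℝ, IsRandomAssignment Q ∧ Q ≠ P ∧ ∀ i, SD (π i) (Q i) (P i)

/-- Stochastic envy-freeness: whenever `i`'s rank distribution (cumulatively)
stochastically dominates `j`'s, agent `i`'s allocation stochastically dominates `j`'s
under `i`'s preferences. -/
def SEF {n m : ℕ} (π : Fin n → Equiv.Perm (Fin m)) (ρ : Equiv.Perm (Fin n) → ℝ)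
    (P : Fin n → Fin m → ℝ) : Prop :=
  ∀ i j : Fin n,
    (∀ t : Fin n, ∑ r ∈ Finset.Iic t, rankDist ρ j r ≤ ∑ r ∈ Finset.Iic t, rankDist ρ i r) →
    SD (π i) (P i) (P j)

/-- `Pr_{σ ∼ Σ}[σ i < σ j]`: the probability that agent `i` has higher priority than `j`. -/
def prHigher {n : ℕ} (ρ : Equiv.Perm (Fin n) → ℝ) (i j : Fin n) : ℝ :=
  ∑ σ ∈ Finset.univ.filter (fun σ => σ i < σ j), ρ σ

/-- `Pr_{f ∼ L}[f i ≻_i f j]`: the probability that agent `i` prefers her own item to `j`'s. -/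
def prPrefers {n m : ℕ} (π : Fin n → Equiv.Perm (Fin m)) (L : (Fin n → Fin m) → ℝ)
    (i j : Fin n) : ℝ :=
  ∑ f ∈ Finset.univ.filter (fun f => π i (f i) < π i (f j)), L f

/-- Likelihood envy-freeness: some lottery inducing `P` satisfies
`Pr[σ i < σ j] ≤ Pr[f i ≻_i f j]` for all agents `i`, `j`. -/
def LEF {n m : ℕ} (π : Fin n → Equiv.Perm (Fin m)) (ρ : Equiv.Perm (Fin n) → ℝ)
    (P : Fin n → Fin m → ℝ) : Prop :=
  ∃ L : (Fin n → Fin m) → ℝ, IsLottery L ∧ induced L = P ∧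
    ∀ i j : Fin n, prHigher ρ i j ≤ prPrefers π L i j

/-- 1-LEF: some lottery inducing `P` satisfies: whenever `i` has higher priority than `j`
with probability `1`, agent `i` prefers her item to `j`'s with probability `1`. -/
def OneLEF {n m : ℕ} (π : Fin n → Equiv.Perm (Fin m)) (ρ : Equiv.Perm (Fin n) → ℝ)
    (P : Fin n → Fin m → ℝ) : Prop :=
  ∃ L : (Fin n → Fin m) → ℝ, IsLottery L ∧ induced L = P ∧
    ∀ i j : Fin n, i ≠ j → prHigher ρ i j = 1 → prPrefers π L i j = 1

/-- The baseline allocation of agent `i`: she gets her `r`-th preferred item with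
probability `Pr[σ i = r]` (ranks beyond `n` get probability `0`). -/
def baseline {n m : ℕ} (π : Fin n → Equiv.Perm (Fin m)) (ρ : Equiv.Perm (Fin n) → ℝ)
    (i : Fin n) (j : Fin m) : ℝ :=
  ∑ σ ∈ Finset.univ.filter (fun σ => (σ i : ℕ) = (π i j : ℕ)), ρ σ

/-- Ranked proportionality: every agent's allocation stochastically dominates
her baseline allocation. -/
def PROP {n m : ℕ} (π : Fin n → Equiv.Perm (Fin m)) (ρ : Equiv.Perm (Fin n) → ℝ)
    (P : Fin n → Fin m → ℝ) : Prop :=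
  ∀ i : Fin n, SD (π i) (P i) (baseline π ρ i)

/-- Pareto efficiency of a simple assignment: no injective assignment makes every agent
weakly better off and some agent strictly better off. -/
def ParetoEff {n m : ℕ} (π : Fin n → Equiv.Perm (Fin m)) (f : Fin n → Fin m) : Prop :=
  ¬ ∃ g : Fin n → Fin m, Function.Injective g ∧
      (∀ i, g i = f i ∨ π i (g i) < π i (f i)) ∧ (∃ i, π i (g i) < π i (f i))

/-- Envy-freeness of a simple assignment with respect to a simple priority. -/
def EnvyFree {n m : ℕ} (π : Fin n → Equiv.Perm (Fin m)) (σ : Equiv.Perm (Fin n))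
    (f : Fin n → Fin m) : Prop :=
  ∀ i j : Fin n, σ i < σ j → π i (f i) < π i (f j)

/-- **Example (SEF does not imply LEF).** Two agents, two items, both agents prefer item `0`
to item `1`; agent `0` has higher priority with probability `1`. The half–half random
assignment satisfies SEF but not LEF. -/
theorem SEF_not_LEF_example :
    SEF (fun _ : Fin 2 => Equiv.refl (Fin 2))
        (fun σ : Equiv.Perm (Fin 2) => if σ = Equiv.refl (Fin 2) then (1 : ℝ) else 0)
        (fun _ _ => 1 / 2) ∧
    ¬ LEF (fun _ : Fin 2 => Equiv.refl (Fin 2))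
        (fun σ : Equiv.Perm (Fin 2) => if σ = Equiv.refl (Fin 2) then (1 : ℝ) else 0)
        (fun _ _ => 1 / 2) := by
  constructor
  · intro i j _ t
    exact le_rfl
  · rintro ⟨L, ⟨hpos, hsum, hinj⟩, hind, hall⟩
    have h01 := hall 0 1
    have hH : prHigher (fun σ : Equiv.Perm (Fin 2) => if σ = Equiv.refl (Fin 2) then (1 : ℝ) else 0) 0 1 = 1 := by
      unfold prHigher
      rw [Finset.sum_ite_eq' _ (Equiv.refl (Fin 2)) (fun _ => (1:ℝ))]
      simp
    have hsub : (Finset.univ.filter (fun f : Fin 2 → Fin 2 =>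
        (Equiv.refl (Fin 2)) (f 0) < (Equiv.refl (Fin 2)) (f 1))) ⊆
        (Finset.univ.filter (fun f : Fin 2 → Fin 2 => f 0 = 0)) := by
      intro f hf
      simp only [Finset.mem_filter, Finset.mem_univ, true_and, Equiv.refl_apply] at hf ⊢
      have h1 : (f 0 : ℕ) < (f 1 : ℕ) := (Finset.mem_filter.mp hf).2
      have h2 : (f 1 : ℕ) < 2 := (f 1).isLt
      omega
    have hle : prPrefers (fun _ : Fin 2 => Equiv.refl (Fin 2)) L 0 1 ≤
        induced L 0 0 := by
      unfold prPrefers induced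
      exact Finset.sum_le_sum_of_subset_of_nonneg hsub (fun f _ _ => hpos f)
    have hval : induced L 0 0 = 1 / 2 := by rw [hind]
    rw [hH] at h01
    rw [hval] at hle
    linarith
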